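/- Let A, C, σ, Ra, α be real numbers with A < 0, α ≠ 0 and C = −2·A·Ra. Suppose (x, y, z) : ℝ → ℝ³ is a differentiable solution of the Glukhovsky–Dolzhansky system ẋ = A y z + C z − σ x, ẏ = −x z + Ra − y, ż = −z + x y. Define X(T) = α·x(αT), Y(T) = α·√(−A)·z(αT), Z(T) = α·√(−A)·(Ra − y(αT)). Then (X, Y, Z) is a solution of the Rabinovich-type system dX/dT = α√(−A)Ra·Y − ασ·X + Y·Z, dY/dT = α√(−A)Ra·X − α·Y − X·Z, dZ/dT = −α·Z + X·Y. Hence, when C = −2·A·Ra, the Glukhovsky–Dolzhansky system is transformed by a linear rescaling of coordinates and time into the Rabinovich system with parameters (h, v₁, v₂, v₃) = (α√(−A)Ra, ασ, α, α). -/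

import Mathlib

/-- When `C = −2·A·Ra` (with `A < 0`, `α ≠ 0`), the linear rescaling
`X(T) = α·x(αT)`, `Y(T) = α·√(−A)·z(αT)`, `Z(T) = α·√(−A)·(Ra − y(αT))` transforms the
Glukhovsky–Dolzhansky system into the Rabinovich system with parameters
`(h, v₁, v₂, v₃) = (α√(−A)Ra, ασ, α, α)`. -/
theorem gd_to_rabinovich
    (A C σ Ra α : ℝ) (hA : A < 0) (hα : α ≠ 0) (hC : C = -2 * A * Ra)
    (x y z : ℝ → ℝ)
    (hx : ∀ t : ℝ, HasDerivAt x (A * y t * z t + C * z t - σ * x t) t)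
    (hy : ∀ t : ℝ, HasDerivAt y (-(x t * z t) + Ra - y t) t)
    (hz : ∀ t : ℝ, HasDerivAt z (-z t + x t * y t) t)
    (X Y Z : ℝ → ℝ)
    (hX : ∀ T, X T = α * x (α * T))
    (hY : ∀ T, Y T = α * Real.sqrt (-A) * z (α * T))
    (hZ : ∀ T, Z T = α * Real.sqrt (-A) * (Ra - y (α * T))) :
    (∀ T : ℝ, HasDerivAt X
      (α * Real.sqrt (-A) * Ra * Y T - α * σ * X T + Y T * Z T) T) ∧
    (∀ T : ℝ, HasDerivAt Y
      (α * Real.sqrt (-A) * Ra * X T - α * Y T - X T * Z T) T) ∧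
    (∀ T : ℝ, HasDerivAt Z (-(α * Z T) + X T * Y T) T) := by
  have hXe : X = fun T => α * x (α * T) := funext hX
  have hYe : Y = fun T => α * Real.sqrt (-A) * z (α * T) := funext hY
  have hZe : Z = fun T => α * Real.sqrt (-A) * (Ra - y (α * T)) := funext hZ
  subst hXe hYe hZe
  have hs : Real.sqrt (-A) * Real.sqrt (-A) = -A :=
    Real.mul_self_sqrt (by linarith)
  refine ⟨fun T => ?_, fun T => ?_, fun T => ?_⟩
  · have hid : HasDerivAt (fun T : ℝ => α * T) α T := by
      simpa using (hasDerivAt_id T).const_mul α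
    have := ((hx (α * T)).comp T hid).const_mul α
    refine this.congr_deriv (Eq.symm ?_)
    linear_combination (α * α * Ra * z (α * T) + α * α * z (α * T) * (Ra - y (α * T))) * hs
      - α * α * z (α * T) * hC
  · have hid : HasDerivAt (fun T : ℝ => α * T) α T := by
      simpa using (hasDerivAt_id T).const_mul α
    have := ((hz (α * T)).comp T hid).const_mul (α * Real.sqrt (-A))
    refine this.congr_deriv (Eq.symm ?_)
    ring
  · have hid : HasDerivAt (fun T : ℝ => α * T) α T := by
      simpa using (hasDerivAt_id T).const_mul α
    have := (((hy (α * T)).comp T hid).const_sub Ra).const_mul (α * Real.sqrt (-A))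
    refine this.congr_deriv (Eq.symm ?_)
    ring
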